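/- Let R be a commutative ring, A ∈ M₂(R) unimodular, and t ∈ R with det(A) ∈ Rt. If R is t-adically complete, then for every n ∈ ℕ there exists Bₙ ∈ M₂(R) congruent to A modulo Rt with det(Bₙ) ∈ R·t^(2ⁿ). In particular, by induction starting from B₀ = A: if det(Bₙ₋₁) ∈ R·t^(2^(n−1)), then there exists Bₙ congruent to Bₙ₋₁ modulo R·t^(2^(n−1)) with det(Bₙ) ∈ R·t^(2ⁿ). -/
import Mathlib


open Matrix

lemma keyStep17 {R : Type*} [CommRing R] (B' : Matrix (Fin 2) (Fin 2) R) (τ : R)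
    (hu : Ideal.span {B' 0 0, B' 0 1, B' 1 0, B' 1 1} ⊔ Ideal.span {τ} = (⊤ : Ideal R))
    (hd : B'.det ∈ Ideal.span {τ}) :
    ∃ B : Matrix (Fin 2) (Fin 2) R,
      (∀ i j, B i j - B' i j ∈ Ideal.span {τ}) ∧ B.det ∈ Ideal.span {τ ^ 2} := by
  obtain ⟨s, hs⟩ := Ideal.mem_span_singleton'.mp hd
  have hmem : (-s : R) ∈ Ideal.span {B' 0 0, B' 0 1, B' 1 0, B' 1 1} ⊔ Ideal.span {τ} := by
    rw [hu]; trivial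
  obtain ⟨u, hui, z, hz, huz⟩ := Submodule.mem_sup.mp hmem
  obtain ⟨v, hv⟩ := Ideal.mem_span_singleton'.mp hz
  simp only [Ideal.mem_span_insert, Ideal.mem_span_singleton'] at hui
  obtain ⟨α, u1, ⟨β, u2, ⟨γ, u3, ⟨δ, hu3⟩, hu2⟩, hu1⟩, hu0⟩ := hui
  have h1 : B' 0 0 * B' 1 1 - B' 0 1 * B' 1 0 = s * τ := by
    linear_combination - hs - Matrix.det_fin_two B'
  have h2 : α * B' 0 0 + β * B' 0 1 + γ * B' 1 0 + δ * B' 1 1 + v * τ = -s := by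
    rw [hu0, hu1, hu2, ← hu3, ← hv] at huz; linear_combination huz
  refine ⟨!![B' 0 0 + τ * δ, B' 0 1 - τ * γ; B' 1 0 - τ * β, B' 1 1 + τ * α], ?_, ?_⟩
  · intro i j
    rw [Ideal.mem_span_singleton]
    fin_cases i <;> fin_cases j <;>
      simp [Matrix.cons_val_zero, Matrix.cons_val_one, Matrix.head_cons, Matrix.of_apply]
  · rw [Matrix.det_fin_two_of, Ideal.mem_span_singleton']
    exact ⟨δ * α - γ * β - v, by linear_combination -h1 - τ * h2⟩

theorem stmt17 {R : Type*} [CommRing R] (A : Matrix (Fin 2) (Fin 2) R)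
    (hA : Ideal.span {A 0 0, A 0 1, A 1 0, A 1 1} = (⊤ : Ideal R))
    (t : R) (ht : A.det ∈ Ideal.span {t})
    (hc : IsAdicComplete (Ideal.span {t}) R) :
    (∀ n : ℕ, ∃ B : Matrix (Fin 2) (Fin 2) R,
      (∀ i j, B i j - A i j ∈ Ideal.span {t}) ∧
      B.det ∈ Ideal.span {t ^ 2 ^ n}) ∧
    (∀ n : ℕ, 1 ≤ n → ∀ B' : Matrix (Fin 2) (Fin 2) R,
      (∀ i j, B' i j - A i j ∈ Ideal.span {t}) →
      B'.det ∈ Ideal.span {t ^ 2 ^ (n - 1)} →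
      ∃ B : Matrix (Fin 2) (Fin 2) R,
        (∀ i j, B i j - B' i j ∈ Ideal.span {t ^ 2 ^ (n - 1)}) ∧
        B.det ∈ Ideal.span {t ^ 2 ^ n}) := by
  have key : ∀ n : ℕ, 1 ≤ n → ∀ B' : Matrix (Fin 2) (Fin 2) R,
      (∀ i j, B' i j - A i j ∈ Ideal.span {t}) →
      B'.det ∈ Ideal.span {t ^ 2 ^ (n - 1)} →
      ∃ B : Matrix (Fin 2) (Fin 2) R,
        (∀ i j, B i j - B' i j ∈ Ideal.span {t ^ 2 ^ (n - 1)}) ∧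
        B.det ∈ Ideal.span {t ^ 2 ^ n} := by
    intro n hn B' hcong hdet
    -- entries of B' together with t generate R
    have hsup : Ideal.span {B' 0 0, B' 0 1, B' 1 0, B' 1 1} ⊔ Ideal.span {t} = ⊤ := by
      rw [eq_top_iff, ← hA, Ideal.span_le]
      intro x hx
      have step : ∀ i j : Fin 2,
          A i j ∈ Ideal.span {B' 0 0, B' 0 1, B' 1 0, B' 1 1} ⊔ Ideal.span {t} := by
        intro i j
        have h1 : B' i j ∈ Ideal.span {B' 0 0, B' 0 1, B' 1 0, B' 1 1} := by
          apply Ideal.subset_span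
          fin_cases i <;> fin_cases j <;> simp
        have h2 : B' i j - A i j ∈ Ideal.span {t} := hcong i j
        have : A i j = B' i j - (B' i j - A i j) := by ring
        rw [this]
        exact sub_mem (Ideal.mem_sup_left h1) (Ideal.mem_sup_right h2)
      rcases hx with h | h | h | h <;> subst h <;> exact step _ _
    -- hence also with t ^ 2 ^ (n - 1)
    have hsup' : Ideal.span {B' 0 0, B' 0 1, B' 1 0, B' 1 1} ⊔
        Ideal.span {t ^ 2 ^ (n - 1)} = ⊤ := by
      rw [← Ideal.span_singleton_pow, ← Ideal.isCoprime_iff_sup_eq] at *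
      exact hsup.pow_right
    obtain ⟨B, hB1, hB2⟩ := keyStep17 B' (t ^ 2 ^ (n - 1)) hsup' hdet
    refine ⟨B, hB1, ?_⟩
    have : (t ^ 2 ^ (n - 1)) ^ 2 = t ^ 2 ^ n := by
      rw [← pow_mul, ← pow_succ, Nat.sub_add_cancel hn]
    rwa [this] at hB2
  refine ⟨?_, key⟩
  intro n
  induction n with
  | zero =>
    exact ⟨A, fun i j => by simp, by simpa using ht⟩
  | succ n ih =>
    obtain ⟨B, hB1, hB2⟩ := ih
    obtain ⟨B'', hB''1, hB''2⟩ := key (n + 1) (by omega) B hB1 (by simpa using hB2)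
    refine ⟨B'', fun i j => ?_, by simpa using hB''2⟩
    have hle : Ideal.span {t ^ 2 ^ (n + 1 - 1)} ≤ Ideal.span {t} :=
      Ideal.span_singleton_le_span_singleton.mpr (dvd_pow_self t (pow_ne_zero _ two_ne_zero))
    have h1 : B'' i j - B i j ∈ Ideal.span {t} := hle (hB''1 i j)
    have h2 : B i j - A i j ∈ Ideal.span {t} := hB1 i j
    have : B'' i j - A i j = (B'' i j - B i j) + (B i j - A i j) := by ring
    rw [this]
    exact add_mem h1 h2
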